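/- arXiv:2207.09751 — 4 statements merged into one kernel-verified Lean document; each statement's English description precedes it below -/
import Mathlib

section
/- Let G be a graph and let H be a c-size contraction of G (i.e., H is obtained from G by contracting a partition of V(G) into connected sets each of size at most c). Then tw(G) ≤ (c+1)·(tw(H)+1) − 1, where tw denotes treewidth. -/
open SimpleGraph

universe u

/-- A set `S` is a connected set of `G` if the induced subgraph is connected. -/
def ConnSet {V : Type u} (G : SimpleGraph V) (S : Set V) : Prop :=
  (G.induce S).Connected

/-- `σ` witnesses that `H` is a contraction of `G`: `σ` is surjective, every fiber
induces a connected nonempty subgraph, and `H.Adj x y` iff the union of the fibers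
of `x` and `y` induces a connected subgraph. -/
def IsContractionMap {V : Type u} {W : Type*} (G : SimpleGraph V) (H : SimpleGraph W)
    (σ : V → W) : Prop :=
  Function.Surjective σ ∧
  (∀ x : W, ConnSet G (σ ⁻¹' {x})) ∧
  (∀ x y : W, x ≠ y → (H.Adj x y ↔ ConnSet G (σ ⁻¹' {x} ∪ σ ⁻¹' {y})))

/-- `H` is a contraction of `G`. -/
def IsContraction {W : Type*} {V : Type u} (H : SimpleGraph W) (G : SimpleGraph V) : Prop :=
  ∃ σ : V → W, IsContractionMap G H σ

/-- The set `S` has diameter at most `c` in `G` (distances measured in `G[S]`). -/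
def DiamLE {V : Type u} (G : SimpleGraph V) (S : Set V) (c : ℕ) : Prop :=
  ∀ u v : S, (G.induce S).dist u v ≤ c

/-- `H` is a `c`-size contraction of `G`: all fibers have at most `c` vertices. -/
def IsSizeContraction {W : Type*} {V : Type u} (H : SimpleGraph W) (G : SimpleGraph V)
    (c : ℕ) : Prop :=
  ∃ σ : V → W, IsContractionMap G H σ ∧ ∀ x : W, (σ ⁻¹' {x}).ncard ≤ c

/-- `H` is a `c`-diameter contraction of `G`: all fibers have diameter at most `c`. -/
def IsDiamContraction {W : Type*} {V : Type u} (H : SimpleGraph W) (G : SimpleGraph V)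
    (c : ℕ) : Prop :=
  ∃ σ : V → W, IsContractionMap G H σ ∧ ∀ x : W, DiamLE G (σ ⁻¹' {x}) c

/-- `H` is a minor of `G`: `H` is a contraction of a subgraph of `G`. -/
def IsMinor {W : Type*} {V : Type u} (H : SimpleGraph W) (G : SimpleGraph V) : Prop :=
  ∃ (S : Set V) (G' : SimpleGraph S),
    (∀ a b : S, G'.Adj a b → G.Adj a.val b.val) ∧ IsContraction H G'

/-- A tree-decomposition of `G`. -/
structure TreeDecomp {V : Type u} (G : SimpleGraph V) where
  ι : Type u
  T : SimpleGraph ι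
  isTree : T.IsTree
  bag : ι → Set V
  mem_bag : ∀ v : V, ∃ t, v ∈ bag t
  edge_bag : ∀ ⦃u v : V⦄, G.Adj u v → ∃ t, u ∈ bag t ∧ v ∈ bag t
  conn_bag : ∀ v : V, ConnSet T {t | v ∈ bag t}

/-- `G` has treewidth at most `k`. -/
def TwLE {V : Type u} (G : SimpleGraph V) (k : ℕ) : Prop :=
  ∃ D : TreeDecomp G, ∀ t, (D.bag t).ncard ≤ k + 1

/-- The treewidth of `G`. -/
noncomputable def tw {V : Type u} (G : SimpleGraph V) : ℕ :=
  sInf {k | TwLE G k}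

/-- Boundary vertices of the `(k × k)`-grid. -/
def Boundary (k : ℕ) (q : Fin k × Fin k) : Prop :=
  q.1.val = 0 ∨ q.1.val = k - 1 ∨ q.2.val = 0 ∨ q.2.val = k - 1

/-- The base relation of the uniformly triangulated grid `Γ_k`: grid edges,
diagonal edges, and edges from the corner `(k-1,k-1)` to all boundary vertices. -/
def triGridRel (k : ℕ) (p q : Fin k × Fin k) : Prop :=
  (p.1 = q.1 ∧ p.2.val + 1 = q.2.val) ∨
  (p.2 = q.2 ∧ p.1.val + 1 = q.1.val) ∨
  (p.1.val = q.1.val + 1 ∧ q.2.val = p.2.val + 1) ∨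
  (p.1.val = k - 1 ∧ p.2.val = k - 1 ∧ Boundary k q)

/-- The uniformly triangulated grid `Γ_k`. -/
def triGrid (k : ℕ) : SimpleGraph (Fin k × Fin k) :=
  SimpleGraph.fromRel (triGridRel k)

/-- `bcg G` is the maximum `k` such that `Γ_k` is a contraction of `G`. -/
noncomputable def bcg {V : Type u} (G : SimpleGraph V) : ℕ :=
  sSup {k | IsContraction (triGrid k) G}

/-- The graph obtained from `G` by dissolving the degree-2 vertex `v` with
neighbors `x` and `y`. -/
def dissolve {V : Type u} (G : SimpleGraph V) (v x y : V) :
    SimpleGraph {u : V // u ≠ v} :=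
  SimpleGraph.fromRel (fun a b => G.Adj a.val b.val ∨ (a.val = x ∧ b.val = y))

/-- Bundled finite simple graphs. -/
structure BGraph : Type 1 where
  V : Type
  [fintypeV : Fintype V]
  G : SimpleGraph V

attribute [instance] BGraph.fintypeV

/-- `B` is obtained from `A` by dissolving one degree-2 vertex. -/
def DissolveStep (A B : BGraph) : Prop :=
  ∃ (v x y : A.V), x ≠ y ∧ A.G.neighborSet v = {x, y} ∧
    Nonempty (B.G ≃g dissolve A.G v x y)

/-- `B` is a dissolution of `A` (a finite sequence of dissolutions of degree-2 vertices). -/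
def IsDissolution (A B : BGraph) : Prop :=
  Relation.ReflTransGen DissolveStep A B

section Aux

variable {V : Type u} {G : SimpleGraph V}

/-- lift reachability along set inclusion -/
lemma reachable_induce_mono {A B : Set V} (hAB : A ⊆ B) {u v : V}
    (hu : u ∈ A) (hv : v ∈ A)
    (hr : (G.induce A).Reachable ⟨u, hu⟩ ⟨v, hv⟩) :
    (G.induce B).Reachable ⟨u, hAB hu⟩ ⟨v, hAB hv⟩ := by
  let f : G.induce A →g G.induce B :=
    ⟨Set.inclusion hAB, fun {a b} hab => hab⟩
  exact hr.map f

lemma connSet_union {A B : Set V} (hA : ConnSet G A) (hB : ConnSet G B)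
    {u v : V} (hu : u ∈ A) (hv : v ∈ B) (huv : G.Adj u v) :
    ConnSet G (A ∪ B) := by
  have hAsub : A ⊆ A ∪ B := Set.subset_union_left
  have hBsub : B ⊆ A ∪ B := Set.subset_union_right
  have key : ∀ a : ↑(A ∪ B), (G.induce (A ∪ B)).Reachable a ⟨u, hAsub hu⟩ := by
    rintro ⟨a, (ha | ha)⟩
    · exact reachable_induce_mono hAsub ha hu (hA.preconnected _ _)
    · have h1 : (G.induce (A ∪ B)).Reachable ⟨a, hBsub ha⟩ ⟨v, hBsub hv⟩ :=
        reachable_induce_mono hBsub ha hv (hB.preconnected _ _)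
      have h2 : (G.induce (A ∪ B)).Adj ⟨v, hBsub hv⟩ ⟨u, hAsub hu⟩ := huv.symm
      exact h1.trans h2.reachable
  have hne : Nonempty ↑(A ∪ B) := ⟨⟨u, hAsub hu⟩⟩
  exact SimpleGraph.Connected.mk (fun a b => (key a).trans (key b).symm)

lemma preimage_ncard_le {W : Type*} [Fintype V] [Fintype W] (σ : V → W) {c : ℕ}
    (hσ : ∀ x : W, (σ ⁻¹' {x}).ncard ≤ c) (S : Set W) :
    (σ ⁻¹' S).ncard ≤ c * S.ncard := by
  classical
  rw [Set.ncard_eq_toFinset_card', Set.ncard_eq_toFinset_card']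
  have hb : (σ ⁻¹' S).toFinset = S.toFinset.biUnion (fun x => (σ ⁻¹' {x}).toFinset) := by
    ext v
    simp [Finset.mem_biUnion, Set.mem_toFinset]
  rw [hb]
  calc (S.toFinset.biUnion fun x => (σ ⁻¹' {x}).toFinset).card
      ≤ ∑ x ∈ S.toFinset, (σ ⁻¹' {x}).toFinset.card := Finset.card_biUnion_le
    _ ≤ ∑ _x ∈ S.toFinset, c := by
        refine Finset.sum_le_sum fun x _ => ?_
        rw [← Set.ncard_eq_toFinset_card']; exact hσ x
    _ = S.toFinset.card * c := by rw [Finset.sum_const, smul_eq_mul]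
    _ = c * S.toFinset.card := Nat.mul_comm _ _

/-- Every finite graph has a trivial tree decomposition. -/
lemma twLE_card {W : Type} [Fintype W] (H : SimpleGraph W) :
    TwLE H (Fintype.card W) := by
  refine ⟨⟨PUnit, ⊥, ?_, fun _ => Set.univ, fun v => ⟨PUnit.unit, trivial⟩,
      fun u v _ => ⟨PUnit.unit, trivial, trivial⟩, fun v => ?_⟩, fun t => ?_⟩
  · exact ⟨SimpleGraph.Connected.mk (fun a b => by rw [Subsingleton.elim a b]),
      SimpleGraph.isAcyclic_bot⟩
  · have hne : Nonempty ↑{t : PUnit | v ∈ (Set.univ : Set W)} := ⟨⟨PUnit.unit, trivial⟩⟩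
    exact SimpleGraph.Connected.mk (fun a b => by rw [Subsingleton.elim a b])
  · simpa using (Set.ncard_univ W).le.trans (Nat.le_succ _)

end Aux

/-- If `H` is a `c`-size contraction of `G`, then
`tw(G) ≤ (c+1)·(tw(H)+1) − 1`. -/
theorem stmt_0 {V W : Type} [Fintype V] [Fintype W]
    (G : SimpleGraph V) (H : SimpleGraph W) (c : ℕ)
    (h : IsSizeContraction H G c) :
    tw G ≤ (c + 1) * (tw H + 1) - 1 := by
  classical
  obtain ⟨σ, ⟨hsurj, hfib, hadj⟩, hsize⟩ := h
  -- get an optimal tree decomposition of H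
  have hne : {k | TwLE H k}.Nonempty := ⟨Fintype.card W, twLE_card H⟩
  have hH : TwLE H (tw H) := Nat.sInf_mem hne
  obtain ⟨D, hD⟩ := hH
  -- build a tree decomposition of G
  have edge_bag : ∀ ⦃u v : V⦄, G.Adj u v → ∃ t, u ∈ σ ⁻¹' D.bag t ∧ v ∈ σ ⁻¹' D.bag t := by
    intro u v huv
    by_cases hc : σ u = σ v
    · obtain ⟨t, ht⟩ := D.mem_bag (σ u)
      exact ⟨t, ht, by simpa [Set.mem_preimage, ← hc] using ht⟩
    · have hHadj : H.Adj (σ u) (σ v) := by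
        rw [hadj _ _ hc]
        exact connSet_union (hfib (σ u)) (hfib (σ v)) rfl rfl huv
      obtain ⟨t, ht1, ht2⟩ := D.edge_bag hHadj
      exact ⟨t, ht1, ht2⟩
  let D' : TreeDecomp G :=
    { ι := D.ι
      T := D.T
      isTree := D.isTree
      bag := fun t => σ ⁻¹' D.bag t
      mem_bag := fun v => D.mem_bag (σ v)
      edge_bag := edge_bag
      conn_bag := fun v => D.conn_bag (σ v) }
  have hk : TwLE G ((c + 1) * (tw H + 1) - 1) := by
    refine ⟨D', fun t => ?_⟩
    have h1 : (σ ⁻¹' D.bag t).ncard ≤ c * (D.bag t).ncard := preimage_ncard_le σ hsize _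
    have h2 : c * (D.bag t).ncard ≤ c * (tw H + 1) := Nat.mul_le_mul_left c (hD t)
    have h3 : (c + 1) * (tw H + 1) - 1 + 1 = (c + 1) * (tw H + 1) :=
      Nat.succ_pred_eq_of_pos (Nat.mul_pos (Nat.succ_pos c) (Nat.succ_pos _))
    rw [h3]
    calc (σ ⁻¹' D.bag t).ncard ≤ c * (tw H + 1) := h1.trans h2
      _ ≤ (c + 1) * (tw H + 1) := Nat.mul_le_mul_right _ (Nat.le_succ c)
  exact Nat.sInf_le hk
end

section
/- Let Q be a graph in which every vertex has degree at least 3, and let G be a graph with a vertex v of degree exactly 2 with neighbors x and y. Let H be the graph obtained from G by dissolving v (deleting v and its two incident edges, and adding the edge {x,y}). If Q is a contraction of G, then Q is a contraction of H. -/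
open SimpleGraph

universe u

-- helpers
lemma reach_map {α β : Type*} {A : SimpleGraph α} {B : SimpleGraph β} (f : α → β)
    (h : ∀ u w, A.Adj u w → B.Reachable (f u) (f w)) {u w : α}
    (hr : A.Reachable u w) : B.Reachable (f u) (f w) := by
  rw [reachable_iff_reflTransGen] at hr
  induction hr with
  | refl => rfl
  | tail _ h' ih => exact ih.trans (h _ _ h')

lemma conn_transfer {α β : Type*} {A : SimpleGraph α} {B : SimpleGraph β} (f : α → β)
    (hf : Function.Surjective f)
    (h : ∀ u w, A.Adj u w → B.Reachable (f u) (f w))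
    (hA : A.Connected) : B.Connected := by
  haveI hne : Nonempty β := ⟨f hA.nonempty.some⟩
  refine ⟨fun b1 b2 => ?_⟩
  obtain ⟨a1, rfl⟩ := hf b1
  obtain ⟨a2, rfl⟩ := hf b2
  exact reach_map f h (hA.preconnected a1 a2)

lemma exists_adj_of_reachable {α : Type*} {A : SimpleGraph α} {u w : α}
    (h : A.Reachable u w) (hne : u ≠ w) : ∃ z, A.Adj u z := by
  obtain ⟨p⟩ := h
  cases p with
  | nil => exact absurd rfl hne
  | cons h' _ => exact ⟨_, h'⟩

section main
variable {V : Type u} {G : SimpleGraph V} {v x y : V}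

lemma dissolve_adj {a b : {u : V // u ≠ v}} :
    (dissolve G v x y).Adj a b ↔ a ≠ b ∧
      ((G.Adj a.val b.val ∨ (a.val = x ∧ b.val = y)) ∨
       (G.Adj b.val a.val ∨ (b.val = x ∧ a.val = y))) := fromRel_adj _ _ _

lemma dissolve_fwd (hxy : x ≠ y) (hvx : G.Adj v x) (hvy : G.Adj v y)
    (hNsub : ∀ z, G.Adj v z → z = x ∨ z = y)
    (S : Set V) (hS : v ∈ S → x ∈ S)
    (h : ConnSet G S) : ConnSet (dissolve G v x y) (Subtype.val ⁻¹' S) := by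
  have hxv : x ≠ v := hvx.ne'
  classical
  set f : S → (Subtype.val ⁻¹' S : Set {u : V // u ≠ v}) := fun u =>
    if h' : u.val = v then ⟨⟨x, hxv⟩, hS (h' ▸ u.prop)⟩ else ⟨⟨u.val, h'⟩, u.prop⟩ with hf
  refine conn_transfer f ?_ ?_ h
  · rintro ⟨⟨u, hu⟩, huS⟩
    refine ⟨⟨u, huS⟩, ?_⟩
    simp only [hf, dif_neg hu]
  · rintro ⟨u, huS⟩ ⟨w, hwS⟩ hadj
    have hadj' : G.Adj u w := hadj
    by_cases hu : u = v
    · have hwv : w ≠ v := by rintro rfl; exact hadj'.ne hu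
      rcases hNsub w (hu ▸ hadj') with hwx | hwy
      · have heq : f ⟨u, huS⟩ = f ⟨w, hwS⟩ := by
          simp only [hf, dif_pos hu, dif_neg hwv]
          exact Subtype.ext (Subtype.ext hwx.symm)
        rw [heq]
      · refine Adj.reachable (show (dissolve G v x y).Adj _ _ from ?_)
        rw [dissolve_adj]
        simp only [hf, dif_pos hu, dif_neg hwv]
        refine ⟨fun hc => hxy ((congrArg Subtype.val hc : x = w).trans hwy), ?_⟩
        exact Or.inl (Or.inr ⟨rfl, hwy⟩)
    · by_cases hw : w = v
      · have huv : u ≠ v := hu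
        rcases hNsub u (hw ▸ hadj'.symm) with hux | huy
        · have heq : f ⟨w, hwS⟩ = f ⟨u, huS⟩ := by
            simp only [hf, dif_pos hw, dif_neg huv]
            exact Subtype.ext (Subtype.ext hux.symm)
          rw [← heq]
        · refine Adj.reachable (show (dissolve G v x y).Adj _ _ from ?_)
          rw [dissolve_adj]
          simp only [hf, dif_pos hw, dif_neg huv]
          refine ⟨fun hc => hxy (((congrArg Subtype.val hc : u = x).symm.trans huy)), ?_⟩
          exact Or.inr (Or.inr ⟨rfl, huy⟩)
      · refine Adj.reachable (show (dissolve G v x y).Adj _ _ from ?_)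
        rw [dissolve_adj]
        simp only [hf, dif_neg hu, dif_neg hw]
        exact ⟨fun hc => hadj'.ne (congrArg Subtype.val hc), Or.inl (Or.inl hadj')⟩

lemma dissolve_bwd (hvx : G.Adj v x) (hvy : G.Adj v y)
    (S : Set V) (hS1 : x ∈ S → v ∈ S) (hS2 : v ∈ S → x ∈ S)
    (h : ConnSet (dissolve G v x y) (Subtype.val ⁻¹' S)) : ConnSet G S := by
  have hxv : x ≠ v := hvx.ne'
  set S' : Set {u : V // u ≠ v} := Subtype.val ⁻¹' S with hS'
  set ρ : S' → S := fun u => ⟨u.val.val, u.prop⟩ with hρ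
  have hedge : ∀ a b : S', (dissolve G v x y |>.induce S').Adj a b →
      (G.induce S).Reachable (ρ a) (ρ b) := by
    rintro ⟨⟨a, ha⟩, haS⟩ ⟨⟨b, hb⟩, hbS⟩ hadj
    have hadj' : (dissolve G v x y).Adj ⟨a, ha⟩ ⟨b, hb⟩ := hadj
    rw [dissolve_adj] at hadj'
    obtain ⟨hne, hcase⟩ := hadj'
    rcases hcase with (hG | ⟨hax, hby⟩) | (hG | ⟨hbx, hay⟩)
    · exact Adj.reachable (by exact hG)
    · have hax' : a = x := hax
      have hby' : b = y := hby
      have hvS : v ∈ S := hS1 (hax' ▸ haS)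
      have h1 : (G.induce S).Adj ⟨a, haS⟩ ⟨v, hvS⟩ := by
        show G.Adj a v; rw [hax']; exact hvx.symm
      have h2 : (G.induce S).Adj ⟨v, hvS⟩ ⟨b, hbS⟩ := by
        show G.Adj v b; rw [hby']; exact hvy
      exact h1.reachable.trans h2.reachable
    · exact Adj.reachable (by exact hG.symm)
    · have hbx' : b = x := hbx
      have hay' : a = y := hay
      have hvS : v ∈ S := hS1 (hbx' ▸ hbS)
      have h1 : (G.induce S).Adj ⟨a, haS⟩ ⟨v, hvS⟩ := by
        show G.Adj a v; rw [hay']; exact hvy.symm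
      have h2 : (G.induce S).Adj ⟨v, hvS⟩ ⟨b, hbS⟩ := by
        show G.Adj v b; rw [hbx']; exact hvx
      exact h1.reachable.trans h2.reachable
  by_cases hvS : v ∈ S
  · have hxS : x ∈ S := hS2 hvS
    have hreach : ∀ u (hu : u ∈ S), (G.induce S).Reachable ⟨u, hu⟩ ⟨x, hxS⟩ := by
      intro u hu
      by_cases huv : u = v
      · refine Adj.reachable (show G.Adj u x from ?_)
        rw [huv]; exact hvx
      · have := h.preconnected ⟨⟨u, huv⟩, hu⟩ ⟨⟨x, hxv⟩, hxS⟩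
        exact reach_map ρ hedge this
    haveI : Nonempty ↑S := ⟨⟨v, hvS⟩⟩
    exact ⟨fun a b => (hreach a.val a.prop).trans (hreach b.val b.prop).symm⟩
  · refine conn_transfer ρ ?_ hedge h
    rintro ⟨u, hu⟩
    exact ⟨⟨⟨u, fun h' => hvS (h' ▸ hu)⟩, hu⟩, rfl⟩

end main

lemma dissolve_comm {V : Type u} (G : SimpleGraph V) (v x y : V) :
    dissolve G v x y = dissolve G v y x := by
  ext a b
  simp only [dissolve, fromRel_adj]
  constructor <;> rintro ⟨h1, h2⟩ <;> exact ⟨h1, by tauto⟩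

lemma key_lemma {VQ V : Type u} (Q : SimpleGraph VQ) (G : SimpleGraph V)
    (v x y : V) (hxy : x ≠ y) (hN : G.neighborSet v = {x, y})
    (σ : V → VQ) (hσ : IsContractionMap G Q σ) (hx : σ x = σ v) :
    IsContraction Q (dissolve G v x y) := by
  obtain ⟨hsurj, hfib, hadj⟩ := hσ
  have hvx : G.Adj v x := by
    have : x ∈ G.neighborSet v := by rw [hN]; exact Or.inl rfl
    exact this
  have hvy : G.Adj v y := by
    have : y ∈ G.neighborSet v := by rw [hN]; exact Or.inr rfl
    exact this
  have hNsub : ∀ z, G.Adj v z → z = x ∨ z = y := by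
    intro z hz
    have : z ∈ G.neighborSet v := hz
    rw [hN] at this
    exact this
  refine ⟨fun u => σ u.val, ?_, ?_, ?_⟩
  · intro w
    obtain ⟨u, hu⟩ := hsurj w
    by_cases huv : u = v
    · exact ⟨⟨x, hvx.ne'⟩, hx.trans (huv ▸ hu)⟩
    · exact ⟨⟨u, huv⟩, hu⟩
  · intro w
    have heq : ((fun u : {u : V // u ≠ v} => σ u.val) ⁻¹' {w}) =
        Subtype.val ⁻¹' (σ ⁻¹' {w}) := rfl
    rw [ConnSet, heq]
    refine dissolve_fwd hxy hvx hvy hNsub _ (fun hv => ?_) (hfib w)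
    exact (show σ x = w from hx.trans hv)
  · intro a b hab
    rw [hadj a b hab]
    have heq : ((fun u : {u : V // u ≠ v} => σ u.val) ⁻¹' {a} ∪
        (fun u : {u : V // u ≠ v} => σ u.val) ⁻¹' {b}) =
        Subtype.val ⁻¹' (σ ⁻¹' {a} ∪ σ ⁻¹' {b}) := rfl
    rw [ConnSet, ConnSet, heq]
    constructor
    · refine dissolve_fwd hxy hvx hvy hNsub _ (fun hv => ?_)
      rcases hv with hv | hv
      · exact Or.inl (hx.trans hv)
      · exact Or.inr (hx.trans hv)
    · refine dissolve_bwd hvx hvy _ (fun hxS => ?_) (fun hvS => ?_)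
      · rcases hxS with h' | h'
        · exact Or.inl (hx.symm.trans h')
        · exact Or.inr (hx.symm.trans h')
      · rcases hvS with h' | h'
        · exact Or.inl (hx.trans h')
        · exact Or.inr (hx.trans h')

lemma fiber_meet {VQ V : Type u} (Q : SimpleGraph VQ) (G : SimpleGraph V)
    (hQ : ∀ w : VQ, 3 ≤ (Q.neighborSet w).ncard)
    (v x y : V) (hN : G.neighborSet v = {x, y})
    (σ : V → VQ) (hσ : IsContractionMap G Q σ) :
    σ x = σ v ∨ σ y = σ v := by
  obtain ⟨hsurj, hfib, hadj⟩ := hσ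
  by_contra hcon
  push_neg at hcon
  obtain ⟨hx', hy'⟩ := hcon
  have hNsub : ∀ z, G.Adj v z → z = x ∨ z = y := by
    intro z hz
    have : z ∈ G.neighborSet v := hz
    rw [hN] at this
    exact this
  -- the fiber of σ v is {v}
  have hF : σ ⁻¹' {σ v} = {v} := by
    apply Set.eq_singleton_iff_unique_mem.2
    refine ⟨rfl, fun u hu => ?_⟩
    by_contra huv
    have hr := (hfib (σ v)).preconnected ⟨v, rfl⟩ ⟨u, hu⟩
    obtain ⟨z, hz⟩ := exists_adj_of_reachable hr
      (fun hc => huv (congrArg Subtype.val hc).symm)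
    have hzadj : G.Adj v z.val := hz
    have hzF : σ z.val = σ v := z.prop
    rcases hNsub z.val hzadj with h' | h'
    · exact hx' (h' ▸ hzF)
    · exact hy' (h' ▸ hzF)
  -- every neighbor of σ v in Q is σ x or σ y
  have hsub : Q.neighborSet (σ v) ⊆ {σ x, σ y} := by
    intro w hw
    have hwadj : Q.Adj (σ v) w := hw
    have hconn := (hadj (σ v) w hwadj.ne).1 hwadj
    obtain ⟨u, hu⟩ := hsurj w
    have huv : u ≠ v := fun h => hwadj.ne' (h ▸ hu).symm
    have hvmem : v ∈ σ ⁻¹' {σ v} ∪ σ ⁻¹' {w} := Or.inl rfl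
    have humem : u ∈ σ ⁻¹' {σ v} ∪ σ ⁻¹' {w} := Or.inr hu
    have hr := hconn.preconnected ⟨v, hvmem⟩ ⟨u, humem⟩
    obtain ⟨z, hz⟩ := exists_adj_of_reachable hr
      (fun hc => huv (congrArg Subtype.val hc).symm)
    have hzadj : G.Adj v z.val := hz
    have hzmem : z.val ∈ σ ⁻¹' {σ v} ∪ σ ⁻¹' {w} := z.prop
    have hzw : σ z.val = w := by
      rcases hzmem with h' | h'
      · exact absurd (hF ▸ h' : z.val ∈ ({v} : Set V)) hzadj.ne'
      · exact h'
    rcases hNsub z.val hzadj with h' | h'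
    · exact Or.inl (h' ▸ hzw).symm
    · exact Or.inr (h' ▸ hzw).symm
  have h3 := hQ (σ v)
  have h2 : (Q.neighborSet (σ v)).ncard ≤ 2 := by
    refine le_trans (Set.ncard_le_ncard hsub (Set.toFinite _)) ?_
    calc ({σ x, σ y} : Set VQ).ncard ≤ ({σ y} : Set VQ).ncard + 1 :=
          Set.ncard_insert_le _ _
      _ ≤ 2 := by rw [Set.ncard_singleton]
  omega


/-- If every vertex of `Q` has degree at least 3, `v` is a vertex of `G`
of degree exactly 2 with neighbors `x ≠ y`, and `Q` is a contraction of `G`, then `Q`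
is a contraction of the graph obtained from `G` by dissolving `v`. -/
theorem stmt_3 {VQ V : Type u} (Q : SimpleGraph VQ) (G : SimpleGraph V)
    (hQ : ∀ w : VQ, 3 ≤ (Q.neighborSet w).ncard)
    (v x y : V) (hxy : x ≠ y) (hN : G.neighborSet v = {x, y})
    (h : IsContraction Q G) :
    IsContraction Q (dissolve G v x y) := by
  obtain ⟨σ, hσ⟩ := h
  rcases fiber_meet Q G hQ v x y hN σ hσ with hx | hy
  · exact key_lemma Q G v x y hxy hN σ hσ hx
  · rw [dissolve_comm]
    refine key_lemma Q G v y x hxy.symm ?_ σ hσ hy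
    rw [hN]; exact Set.pair_comm x y
end

section
/- Let S be a complete Λ-state configuration of a connected graph G with respect to a c-diameter partition A such that every cloud of A is contained in some state. Then the quotient of G by the partition into states yields a graph G' containing a subgraph isomorphic to Λ, and G' is a contraction of any graph H that is obtained from G by contracting each cloud of A to a single vertex. -/
open SimpleGraph

universe u

/-- The quotient graph of `G` by the partition into the fibers of `s`: two classes are
adjacent iff the union of the corresponding fibers induces a connected subgraph. -/
def quotGraph {V ι : Type u} (G : SimpleGraph V) (s : V → ι) : SimpleGraph ι where
  Adj i j := i ≠ j ∧ ConnSet G (s ⁻¹' {i} ∪ s ⁻¹' {j})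
  symm := by
    constructor
    intro i j hij
    exact ⟨hij.1.symm, by rw [Set.union_comm]; exact hij.2⟩
  loopless := ⟨fun i hi => hi.1 rfl⟩

section Helpers

variable {V : Type u} {W : Type*} {G : SimpleGraph V}

/-- Reachability by a walk whose support stays inside `S`. -/
def ReachIn (G : SimpleGraph V) (S : Set V) (u v : V) : Prop :=
  ∃ w : G.Walk u v, ∀ x ∈ w.support, x ∈ S

lemma ReachIn.mono {S T : Set V} (hST : S ⊆ T) {u v : V} (h : ReachIn G S u v) :
    ReachIn G T u v :=
  ⟨h.choose, fun x hx => hST (h.choose_spec x hx)⟩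

lemma ReachIn.trans {S : Set V} {u v w : V} (h1 : ReachIn G S u v)
    (h2 : ReachIn G S v w) : ReachIn G S u w := by
  obtain ⟨p, hp⟩ := h1
  obtain ⟨q, hq⟩ := h2
  refine ⟨p.append q, fun x hx => ?_⟩
  rcases (SimpleGraph.Walk.mem_support_append_iff _ _).mp hx with h | h
  · exact hp x h
  · exact hq x h

lemma ReachIn.symm {S : Set V} {u v : V} (h : ReachIn G S u v) : ReachIn G S v u := by
  obtain ⟨p, hp⟩ := h
  exact ⟨p.reverse, fun x hx => hp x (by simpa using hx)⟩

lemma reachIn_of_induce_walk {S : Set V} :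
    ∀ {a b : ↥S} (_ : (G.induce S).Walk a b), ReachIn G S a.val b.val
  | a, _, SimpleGraph.Walk.nil => ⟨SimpleGraph.Walk.nil, by simp⟩
  | a, b, SimpleGraph.Walk.cons h p => by
    obtain ⟨q, hq⟩ := reachIn_of_induce_walk p
    refine ⟨SimpleGraph.Walk.cons h q, fun x hx => ?_⟩
    rcases List.mem_cons.mp (show x ∈ (a : V) :: q.support from hx) with h' | h'
    · exact h' ▸ a.2
    · exact hq x h'

lemma reachable_induce_of_walk {S : Set V} :
    ∀ {u v : V} (w : G.Walk u v), (∀ x ∈ w.support, x ∈ S) →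
    ∀ (hu : u ∈ S) (hv : v ∈ S), (G.induce S).Reachable ⟨u, hu⟩ ⟨v, hv⟩
  | _, _, SimpleGraph.Walk.nil, _, _, _ => SimpleGraph.Reachable.refl _
  | u, v, SimpleGraph.Walk.cons (v := b) hadj p, h, hu, hv => by
    have hb : b ∈ S := h b (by simp)
    have hA : (G.induce S).Adj ⟨u, hu⟩ ⟨b, hb⟩ := hadj
    exact hA.reachable.trans
      (reachable_induce_of_walk p (fun x hx => h x (by simp [hx])) hb hv)

lemma connSet_iff {S : Set V} :
    ConnSet G S ↔ S.Nonempty ∧ ∀ u ∈ S, ∀ v ∈ S, ReachIn G S u v := by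
  constructor
  · intro h
    refine ⟨?_, fun u hu v hv => ?_⟩
    · obtain ⟨⟨v, hv⟩⟩ := h.nonempty
      exact ⟨v, hv⟩
    · obtain ⟨w⟩ := h.preconnected ⟨u, hu⟩ ⟨v, hv⟩
      exact reachIn_of_induce_walk w
  · rintro ⟨⟨v0, hv0⟩, hr⟩
    rw [ConnSet, SimpleGraph.connected_iff]
    refine ⟨?_, ⟨⟨v0, hv0⟩⟩⟩
    rintro ⟨u, hu⟩ ⟨v, hv⟩
    obtain ⟨w, hw⟩ := hr u hu v hv
    exact reachable_induce_of_walk w hw hu hv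

lemma ConnSet.nonempty' {S : Set V} (h : ConnSet G S) : S.Nonempty :=
  (connSet_iff.mp h).1

lemma ConnSet.reachIn {S : Set V} (h : ConnSet G S) {u v : V}
    (hu : u ∈ S) (hv : v ∈ S) : ReachIn G S u v :=
  (connSet_iff.mp h).2 u hu v hv

variable {H : SimpleGraph W} {φ : V → W}

/-- If all fibers of `φ` are connected, a `G`-edge maps to an `H`-edge or a loop. -/
lemma adj_image (hfib : ∀ x : W, ConnSet G (φ ⁻¹' {x}))
    (hadj : ∀ x y : W, x ≠ y → (H.Adj x y ↔ ConnSet G (φ ⁻¹' {x} ∪ φ ⁻¹' {y})))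
    {a b : V} (hab : G.Adj a b) (hne : φ a ≠ φ b) : H.Adj (φ a) (φ b) := by
  rw [hadj _ _ hne]
  have ha : a ∈ φ ⁻¹' {φ a} := rfl
  have hb : b ∈ φ ⁻¹' {φ b} := rfl
  refine connSet_iff.mpr ⟨⟨a, Or.inl ha⟩, ?_⟩
  have key : ∀ u ∈ φ ⁻¹' {φ a} ∪ φ ⁻¹' {φ b},
      ReachIn G (φ ⁻¹' {φ a} ∪ φ ⁻¹' {φ b}) u a := by
    rintro u (hu | hu)
    · exact ((hfib (φ a)).reachIn hu ha).mono Set.subset_union_left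
    · refine (((hfib (φ b)).reachIn hu hb).mono Set.subset_union_right).trans
        ⟨SimpleGraph.Walk.cons hab.symm SimpleGraph.Walk.nil, ?_⟩
      intro x hx
      rcases (by simpa using hx : x = b ∨ x = a) with h' | h'
      · subst h'; exact Or.inr hb
      · subst h'; exact Or.inl ha
  exact fun u hu v hv => (key u hu).trans (key v hv).symm

lemma img_reach (hfib : ∀ x : W, ConnSet G (φ ⁻¹' {x}))
    (hadj : ∀ x y : W, x ≠ y → (H.Adj x y ↔ ConnSet G (φ ⁻¹' {x} ∪ φ ⁻¹' {y})))
    {T : Set V} :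
    ∀ {u v : V} (w : G.Walk u v), (∀ x ∈ w.support, x ∈ T) →
    ∀ (hu : u ∈ T) (hv : v ∈ T),
      (H.induce (φ '' T)).Reachable ⟨φ u, ⟨u, hu, rfl⟩⟩ ⟨φ v, ⟨v, hv, rfl⟩⟩
  | _, _, SimpleGraph.Walk.nil, _, _, _ => SimpleGraph.Reachable.refl _
  | u, v, SimpleGraph.Walk.cons (v := b) hab p, h, hu, hv => by
    have hb : b ∈ T := h b (by simp)
    have ih := img_reach hfib hadj p (fun x hx => h x (by simp [hx])) hb hv
    by_cases he : φ u = φ b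
    · have : (⟨φ u, ⟨u, hu, rfl⟩⟩ : ↥(φ '' T)) = ⟨φ b, ⟨b, hb, rfl⟩⟩ :=
        Subtype.ext he
      rw [this]
      exact ih
    · have hA : (H.induce (φ '' T)).Adj ⟨φ u, ⟨u, hu, rfl⟩⟩ ⟨φ b, ⟨b, hb, rfl⟩⟩ :=
        adj_image hfib hadj hab he
      exact hA.reachable.trans ih

/-- The image of a saturated connected set under a contraction map is connected. -/
lemma img_connSet (hfib : ∀ x : W, ConnSet G (φ ⁻¹' {x}))
    (hadj : ∀ x y : W, x ≠ y → (H.Adj x y ↔ ConnSet G (φ ⁻¹' {x} ∪ φ ⁻¹' {y})))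
    {T : Set V} (hT : ConnSet G T) : ConnSet H (φ '' T) := by
  rw [ConnSet, SimpleGraph.connected_iff]
  obtain ⟨v0, hv0⟩ := hT.nonempty'
  refine ⟨?_, ⟨⟨φ v0, ⟨v0, hv0, rfl⟩⟩⟩⟩
  rintro ⟨x, hx⟩ ⟨y, hy⟩
  obtain ⟨u, hu, rfl⟩ := hx
  obtain ⟨v, hv, rfl⟩ := hy
  obtain ⟨w, hw⟩ := hT.reachIn hu hv
  exact img_reach hfib hadj w hw hu hv

lemma pre_reach (hfib : ∀ x : W, ConnSet G (φ ⁻¹' {x}))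
    (hadj : ∀ x y : W, x ≠ y → (H.Adj x y ↔ ConnSet G (φ ⁻¹' {x} ∪ φ ⁻¹' {y})))
    {T : Set V} (hsat : ∀ u w, φ u = φ w → u ∈ T → w ∈ T) :
    ∀ {x y : W} (w : H.Walk x y), (∀ z ∈ w.support, z ∈ φ '' T) →
    ∀ a b, φ a = x → φ b = y → ReachIn G T a b
  | x, _, SimpleGraph.Walk.nil, h, a, b, ha, hb => by
    have hx : x ∈ φ '' T := h x (by simp)
    obtain ⟨w0, hw0, hw0x⟩ := hx
    have hfibT : φ ⁻¹' {x} ⊆ T := fun u hu =>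
      hsat w0 u (hw0x.trans hu.symm) hw0
    have ha' : a ∈ φ ⁻¹' {x} := Set.mem_preimage.mpr (Set.mem_singleton_iff.mpr ha)
    have hb' : b ∈ φ ⁻¹' {x} := Set.mem_preimage.mpr (Set.mem_singleton_iff.mpr hb)
    exact ((hfib x).reachIn ha' hb').mono hfibT
  | x, y, SimpleGraph.Walk.cons (v := z) hxz p, h, a, b, ha, hb => by
    have hz : z ∈ φ '' T := h z (by simp)
    have hx : x ∈ φ '' T := h x (by simp)
    obtain ⟨a', ha'⟩ : ∃ a', φ a' = z := by
      obtain ⟨u, hu⟩ := (hfib z).nonempty'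
      exact ⟨u, hu⟩
    have hub : ReachIn G (φ ⁻¹' {x} ∪ φ ⁻¹' {z}) a a' := by
      have hc := (hadj x z hxz.ne).mp hxz
      exact hc.reachIn
        (Or.inl (Set.mem_preimage.mpr (Set.mem_singleton_iff.mpr ha)))
        (Or.inr (Set.mem_preimage.mpr (Set.mem_singleton_iff.mpr ha')))
    have hsub : φ ⁻¹' {x} ∪ φ ⁻¹' {z} ⊆ T := by
      rintro u (hu | hu)
      · obtain ⟨w0, hw0, hw0x⟩ := hx
        exact hsat w0 u (hw0x.trans hu.symm) hw0
      · obtain ⟨w0, hw0, hw0z⟩ := hz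
        exact hsat w0 u (hw0z.trans hu.symm) hw0
    exact (hub.mono hsub).trans
      (pre_reach hfib hadj hsat p (fun w hw => h w (by simp [hw])) a' b ha' hb)

/-- The preimage of a connected image of a saturated set is connected. -/
lemma pre_connSet (hfib : ∀ x : W, ConnSet G (φ ⁻¹' {x}))
    (hadj : ∀ x y : W, x ≠ y → (H.Adj x y ↔ ConnSet G (φ ⁻¹' {x} ∪ φ ⁻¹' {y})))
    {T : Set V} (hsat : ∀ u w, φ u = φ w → u ∈ T → w ∈ T)
    (hT : ConnSet H (φ '' T)) : ConnSet G T := by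
  refine connSet_iff.mpr ⟨?_, fun u hu v hv => ?_⟩
  · obtain ⟨x, hx⟩ := hT.nonempty'
    obtain ⟨u, hu, _⟩ := hx
    exact ⟨u, hu⟩
  · obtain ⟨w, hw⟩ := hT.reachIn ⟨u, hu, rfl⟩ ⟨v, hv, rfl⟩
    exact pre_reach hfib hadj hsat w hw u v rfl rfl

end Helpers

/-- Let `S` be a complete `Λ`-state configuration of a connected graph
`G` with respect to a `c`-diameter partition `A` all of whose clouds are contained in
states.  The states are the fibers of `s : V → ι`, the capitals are `Wt i ⊆ s⁻¹(i)`,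
and the freeways are internally disjoint paths `P h` (one for each edge `h` of `Λ`)
joining the capitals of their endpoints inside the union of the two states.  Then the
quotient `G'` of `G` by the states contains `Λ` as a subgraph, and `G'` is a
contraction of any graph `H` obtained from `G` by contracting each cloud of `A` to a
single vertex. -/
theorem stmt_17 {V ι : Type u} (G : SimpleGraph V) (hG : G.Connected)
    (Λ : SimpleGraph ι) (Wt : ι → Set V)
    (hWconn : ∀ i, ConnSet G (Wt i))
    (hWdisj : ∀ i j, i ≠ j → Disjoint (Wt i) (Wt j))
    -- the states are the fibers of `s` (the configuration is complete)
    (s : V → ι) (hs : Function.Surjective s)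
    (hXconn : ∀ i, ConnSet G (s ⁻¹' {i}))
    (hWX : ∀ i, Wt i ⊆ s ⁻¹' {i})
    -- the freeways
    (ep₁ ep₂ : ∀ {i j : ι}, Λ.Adj i j → V)
    (P : ∀ {i j : ι} (h : Λ.Adj i j), G.Walk (ep₁ h) (ep₂ h))
    (hPpath : ∀ {i j : ι} (h : Λ.Adj i j), (P h).IsPath)
    (hep₁ : ∀ {i j : ι} (h : Λ.Adj i j), ep₁ h ∈ Wt i)
    (hep₂ : ∀ {i j : ι} (h : Λ.Adj i j), ep₂ h ∈ Wt j)
    (hPsub : ∀ {i j : ι} (h : Λ.Adj i j),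
      ∀ w ∈ (P h).support, w ∈ s ⁻¹' {i} ∪ s ⁻¹' {j})
    (hPdisj : ∀ {i j i' j' : ι} (h : Λ.Adj i j) (h' : Λ.Adj i' j'),
      ¬ (i = i' ∧ j = j') →
      ∀ w ∈ (P h).support, w ≠ ep₁ h → w ≠ ep₂ h → w ∉ (P h').support)
    -- the `c`-diameter partition `A` into clouds, each inside a state
    (A : Set (Set V)) (hApart : ∀ v : V, ∃! C, C ∈ A ∧ v ∈ C)
    (hAconn : ∀ C ∈ A, ConnSet G C)
    (c : ℕ) (hAdiam : ∀ C ∈ A, DiamLE G C c)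
    (hCloudState : ∀ C ∈ A, ∃ i, C ⊆ s ⁻¹' {i}) :
    (∀ i j, Λ.Adj i j → (quotGraph G s).Adj i j) ∧
    (∀ (VH : Type u) (H : SimpleGraph VH) (φ : V → VH),
      IsContractionMap G H φ →
      (∀ u w : V, φ u = φ w ↔ ∃ C ∈ A, u ∈ C ∧ w ∈ C) →
      IsContraction (quotGraph G s) H) := by
  constructor
  · -- Part 1: Λ is a subgraph of the quotient
    intro i j h
    refine ⟨h.ne, ?_⟩
    obtain ⟨v0, hv0⟩ := hs i
    refine connSet_iff.mpr ⟨⟨v0, Or.inl hv0⟩, ?_⟩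
    have hPrev : ReachIn G (s ⁻¹' {i} ∪ s ⁻¹' {j}) (ep₁ h) (ep₂ h) :=
      ⟨P h, hPsub h⟩
    have key : ∀ u ∈ s ⁻¹' {i} ∪ s ⁻¹' {j},
        ReachIn G (s ⁻¹' {i} ∪ s ⁻¹' {j}) u (ep₁ h) := by
      rintro u (hu | hu)
      · exact ((hXconn i).reachIn hu (hWX i (hep₁ h))).mono Set.subset_union_left
      · exact (((hXconn j).reachIn hu (hWX j (hep₂ h))).mono
          Set.subset_union_right).trans hPrev.symm
    exact fun u hu v hv => (key u hu).trans (key v hv).symm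
  · -- Part 2: the quotient is a contraction of H
    rintro VH H φ ⟨hsurj, hfib, hadj⟩ hsame
    have hconst : ∀ u w : V, φ u = φ w → s u = s w := by
      intro u w h
      obtain ⟨C, hCA, huC, hwC⟩ := (hsame u w).mp h
      obtain ⟨i, hCi⟩ := hCloudState C hCA
      have h1 : s u ∈ ({i} : Set ι) := hCi huC
      have h2 : s w ∈ ({i} : Set ι) := hCi hwC
      exact h1.trans h2.symm
    refine ⟨fun x => s (hsurj x).choose, ?_, ?_, ?_⟩
    · -- surjective
      intro i
      obtain ⟨v, hv⟩ := hs i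
      refine ⟨φ v, ?_⟩
      have := hconst _ _ (hsurj (φ v)).choose_spec
      exact this.trans hv
    · -- fibers connected
      intro i
      have hfibeq : (fun x => s (hsurj x).choose) ⁻¹' {i} = φ '' (s ⁻¹' {i}) := by
        ext x
        constructor
        · intro hx
          exact ⟨(hsurj x).choose, hx, (hsurj x).choose_spec⟩
        · rintro ⟨u, hu, rfl⟩
          have : s (hsurj (φ u)).choose = s u :=
            hconst _ _ (hsurj (φ u)).choose_spec
          exact this.trans hu
      rw [hfibeq]
      exact img_connSet hfib hadj (hXconn i)
    · -- adjacency condition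
      intro i j hij
      have hfibeq : ∀ k : ι,
          (fun x => s (hsurj x).choose) ⁻¹' {k} = φ '' (s ⁻¹' {k}) := by
        intro k
        ext x
        constructor
        · intro hx
          exact ⟨(hsurj x).choose, hx, (hsurj x).choose_spec⟩
        · rintro ⟨u, hu, rfl⟩
          have : s (hsurj (φ u)).choose = s u :=
            hconst _ _ (hsurj (φ u)).choose_spec
          exact this.trans hu
      rw [hfibeq i, hfibeq j, ← Set.image_union]
      have hsat : ∀ u w : V, φ u = φ w →
          u ∈ s ⁻¹' {i} ∪ s ⁻¹' {j} → w ∈ s ⁻¹' {i} ∪ s ⁻¹' {j} := by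
        rintro u w h (hu | hu)
        · exact Or.inl ((hconst u w h).symm.trans hu)
        · exact Or.inr ((hconst u w h).symm.trans hu)
      constructor
      · rintro ⟨-, hc⟩
        exact img_connSet hfib hadj hc
      · intro hc
        exact ⟨hij, pre_connSet hfib hadj hsat hc⟩
end

section
/- Let k' ≥ 3 and let Γ̂_{k'} be the extended uniformly triangulated grid. Contracting in Γ̂_{k'} the edge joining the apex vertex a to the corner vertex (k'−1, k'−1) yields a graph isomorphic to the uniformly triangulated grid Γ_{k'}. In particular, Γ_{k'} is a contraction of Γ̂_{k'}. -/
open SimpleGraph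

universe u

/-- The base relation of the extended uniformly triangulated grid `Γ̂_k`: grid and
diagonal edges, and edges from the apex `none` to all boundary vertices. -/
def triGridExtRel (k : ℕ) : Option (Fin k × Fin k) → Option (Fin k × Fin k) → Prop
  | some p, some q =>
      (p.1 = q.1 ∧ p.2.val + 1 = q.2.val) ∨
      (p.2 = q.2 ∧ p.1.val + 1 = q.1.val) ∨
      (p.1.val = q.1.val + 1 ∧ q.2.val = p.2.val + 1)
  | none, some q => Boundary k q
  | _, _ => False

/-- The extended uniformly triangulated grid `Γ̂_k`, with apex vertex `none`. -/
def triGridExt (k : ℕ) : SimpleGraph (Option (Fin k × Fin k)) :=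
  SimpleGraph.fromRel (triGridExtRel k)


lemma connSet_singleton {V : Type u} (G : SimpleGraph V) (a : V) : ConnSet G {a} := by
  rw [ConnSet, connected_iff]
  refine ⟨?_, ⟨⟨a, rfl⟩⟩⟩
  rintro ⟨u, hu⟩ ⟨v, hv⟩
  simp only [Set.mem_singleton_iff] at hu hv
  subst hu; subst hv
  exact Reachable.refl _

lemma connSet_pair {V : Type u} {G : SimpleGraph V} {a b : V} (h : G.Adj a b) :
    ConnSet G {a, b} := by
  rw [ConnSet, connected_iff]
  refine ⟨?_, ⟨⟨a, by simp⟩⟩⟩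
  have key : ∀ w : ({a, b} : Set V), (G.induce {a,b}).Reachable w ⟨a, by simp⟩ := by
    rintro ⟨w, hw⟩
    rcases hw with h1 | h1
    · subst h1; exact Reachable.refl _
    · subst h1
      exact Adj.reachable (by simpa [comap_adj] using h.symm)
  exact fun u v => (key u).trans (key v).symm

lemma connSet_triple {V : Type u} {G : SimpleGraph V} {a b x : V} (hab : G.Adj a b)
    (hx : G.Adj x a ∨ G.Adj x b) : ConnSet G {a, b, x} := by
  rw [ConnSet, connected_iff]
  refine ⟨?_, ⟨⟨a, by simp⟩⟩⟩
  have hb : (G.induce {a,b,x}).Reachable ⟨b, by simp⟩ ⟨a, by simp⟩ :=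
    Adj.reachable (by simpa [comap_adj] using hab.symm)
  have key : ∀ w : ({a, b, x} : Set V), (G.induce {a,b,x}).Reachable w ⟨a, by simp⟩ := by
    rintro ⟨w, hw⟩
    rcases hw with h1 | h1 | h1
    · subst h1; exact Reachable.refl _
    · subst h1; exact hb
    · subst h1
      rcases hx with h2 | h2
      · exact Adj.reachable (by simpa [comap_adj] using h2)
      · exact (Adj.reachable (by simpa [comap_adj] using h2)).trans hb
  exact fun u v => (key u).trans (key v).symm

lemma exists_adj_of_connSet {V : Type u} {G : SimpleGraph V} {S : Set V}
    (h : ConnSet G S) {a b : V} (ha : a ∈ S) (hb : b ∈ S) (hab : a ≠ b) :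
    ∃ s ∈ S, s ≠ a ∧ G.Adj a s := by
  obtain ⟨w⟩ := h.preconnected ⟨a, ha⟩ ⟨b, hb⟩
  have hnil : ¬ w.Nil := Walk.not_nil_of_ne (by simpa [Subtype.ext_iff] using hab)
  have hadj := w.adj_snd hnil
  exact ⟨(w.getVert 1).val, (w.getVert 1).property,
    fun he => hadj.ne (Subtype.ext he.symm), by simpa [comap_adj] using hadj⟩

/-- For `k ≥ 3`, contracting in `Γ̂_k` the edge joining the apex to the
corner `(k−1,k−1)` (i.e., the map fixing the grid and sending the apex to the corner)
yields a graph isomorphic to `Γ_k`; in particular `Γ_k` is a contraction of `Γ̂_k`. -/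
theorem stmt_18 (k : ℕ) (hk : 3 ≤ k) :
    IsContractionMap (triGridExt k) (triGrid k)
      (fun o => o.getD (⟨k - 1, by omega⟩, ⟨k - 1, by omega⟩)) ∧
    IsContraction (triGrid k) (triGridExt k) := by
  set c : Fin k × Fin k := (⟨k - 1, by omega⟩, ⟨k - 1, by omega⟩) with hc
  set σ : Option (Fin k × Fin k) → Fin k × Fin k := fun o => o.getD c with hσ
  have hcorner : ∀ p : Fin k × Fin k, p.1.val = k - 1 → p.2.val = k - 1 → p = c := by
    rintro ⟨⟨i, hi⟩, ⟨j, hj⟩⟩ h1 h2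
    simp only [hc]
    exact Prod.ext (Fin.ext h1) (Fin.ext h2)
  have hBc : Boundary k c := by simp [Boundary, hc]
  have e1 : (triGridExt k).Adj none (some c) := by
    rw [triGridExt, fromRel_adj]
    exact ⟨by simp, Or.inl hBc⟩
  have hpre : ∀ x : Fin k × Fin k, x ≠ c → σ ⁻¹' {x} = {some x} := by
    intro x hx
    ext o
    cases o with
    | none => simp [hσ, Set.mem_preimage, (Ne.symm hx)]
    | some p => simp [hσ]
  have hprec : σ ⁻¹' {c} = {none, some c} := by
    ext o
    cases o with
    | none => simp [hσ]
    | some p => simp [hσ]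
  -- adjacency in the extended grid between grid vertices
  have hAdjSome : ∀ x y : Fin k × Fin k, x ≠ c → y ≠ c →
      ((triGrid k).Adj x y ↔ (triGridExt k).Adj (some x) (some y)) := by
    intro x y hx hy
    rw [triGrid, triGridExt, fromRel_adj, fromRel_adj]
    constructor
    · rintro ⟨hne, h⟩
      refine ⟨by simpa using hne, ?_⟩
      rcases h with h | h
      · rcases h with h | h | h | h
        · exact Or.inl (Or.inl h)
        · exact Or.inl (Or.inr (Or.inl h))
        · exact Or.inl (Or.inr (Or.inr h))
        · exact absurd (hcorner x h.1 h.2.1) hx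
      · rcases h with h | h | h | h
        · exact Or.inr (Or.inl h)
        · exact Or.inr (Or.inr (Or.inl h))
        · exact Or.inr (Or.inr (Or.inr h))
        · exact absurd (hcorner y h.1 h.2.1) hy
    · rintro ⟨hne, h⟩
      refine ⟨by simpa using hne, ?_⟩
      rcases h with h | h
      · rcases h with h | h | h
        · exact Or.inl (Or.inl h)
        · exact Or.inl (Or.inr (Or.inl h))
        · exact Or.inl (Or.inr (Or.inr (Or.inl h)))
      · rcases h with h | h | h
        · exact Or.inr (Or.inl h)
        · exact Or.inr (Or.inr (Or.inl h))
        · exact Or.inr (Or.inr (Or.inr (Or.inl h)))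
  have hAdjNone : ∀ x : Fin k × Fin k,
      ((triGridExt k).Adj (some x) none ↔ Boundary k x) := by
    intro x
    rw [triGridExt, fromRel_adj]
    constructor
    · rintro ⟨-, h | h⟩
      · exact h.elim
      · exact h
    · intro h
      exact ⟨by simp, Or.inr h⟩
  -- adjacency with the corner in triGrid
  have hAdjCorner : ∀ x : Fin k × Fin k, x ≠ c →
      ((triGrid k).Adj x c ↔
        ((triGridExt k).Adj (some x) none ∨ (triGridExt k).Adj (some x) (some c))) := by
    intro x hx
    rw [triGrid, fromRel_adj, hAdjNone, triGridExt, fromRel_adj]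
    constructor
    · rintro ⟨hne, h⟩
      rcases h with h | h
      · rcases h with h | h | h | h
        · exact Or.inr ⟨by simpa using hx, Or.inl (Or.inl h)⟩
        · exact Or.inr ⟨by simpa using hx, Or.inl (Or.inr (Or.inl h))⟩
        · exact Or.inr ⟨by simpa using hx, Or.inl (Or.inr (Or.inr h))⟩
        · exact absurd (hcorner x h.1 h.2.1) hx
      · rcases h with h | h | h | h
        · exact Or.inr ⟨by simpa using hx, Or.inr (Or.inl h)⟩
        · exact Or.inr ⟨by simpa using hx, Or.inr (Or.inr (Or.inl h))⟩
        · exact Or.inr ⟨by simpa using hx, Or.inr (Or.inr (Or.inr h))⟩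
        · exact Or.inl h.2.2
    · rintro (h | ⟨-, h⟩)
      · refine ⟨hx, Or.inr (Or.inr (Or.inr (Or.inr ⟨rfl, rfl, h⟩)))⟩
      · refine ⟨hx, ?_⟩
        rcases h with h | h
        · rcases h with h | h | h
          · exact Or.inl (Or.inl h)
          · exact Or.inl (Or.inr (Or.inl h))
          · exact Or.inl (Or.inr (Or.inr (Or.inl h)))
        · rcases h with h | h | h
          · exact Or.inr (Or.inl h)
          · exact Or.inr (Or.inr (Or.inl h))
          · exact Or.inr (Or.inr (Or.inr (Or.inl h)))
  -- connectivity of the 3-set with the corner fiber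
  have hkey : ∀ x : Fin k × Fin k, x ≠ c →
      ((triGrid k).Adj x c ↔ ConnSet (triGridExt k) (σ ⁻¹' {x} ∪ σ ⁻¹' {c})) := by
    intro x hx
    rw [hpre x hx, hprec, hAdjCorner x hx]
    have hset : ({some x} : Set (Option (Fin k × Fin k))) ∪ {none, some c}
        = {none, some c, some x} := by
      ext o; simp only [Set.mem_union, Set.mem_singleton_iff, Set.mem_insert_iff]; tauto
    rw [hset]
    constructor
    · intro h
      exact connSet_triple e1 (by rcases h with h | h
                                  · exact Or.inl h
                                  · exact Or.inr h)
    · intro h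
      obtain ⟨s, hs, hsne, hadj⟩ := exists_adj_of_connSet h
        (a := some x) (b := none) (by simp) (by simp) (by simp)
      rcases hs with h1 | h1 | h1
      · subst h1; exact Or.inl hadj
      · subst h1; exact Or.inr hadj
      · exact absurd h1 hsne
  have hmap : IsContractionMap (triGridExt k) (triGrid k) σ := by
    refine ⟨fun x => ⟨some x, rfl⟩, ?_, ?_⟩
    · intro x
      by_cases hx : x = c
      · subst hx
        rw [hprec]
        exact connSet_pair e1
      · rw [hpre x hx]
        exact connSet_singleton _ _
    · intro x y hxy
      by_cases hx : x = c
      · subst hx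
        have hy : y ≠ c := fun h => hxy h.symm
        rw [Set.union_comm, adj_comm]
        exact hkey y hy
      · by_cases hy : y = c
        · subst hy
          exact hkey x hx
        · rw [hpre x hx, hpre y hy, hAdjSome x y hx hy]
          constructor
          · intro h
            have : ({some x} : Set (Option (Fin k × Fin k))) ∪ {some y}
                = {some x, some y} := by ext o; simp only [Set.mem_union, Set.mem_singleton_iff, Set.mem_insert_iff]
            rw [this]
            exact connSet_pair h
          · intro h
            obtain ⟨s, hs, hsne, hadj⟩ := exists_adj_of_connSet h
              (a := some x) (b := some y) (by simp) (by simp) (by simp [hxy])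
            rcases hs with h1 | h1
            · exact absurd h1 hsne
            · subst h1; exact hadj
  exact ⟨hmap, σ, hmap⟩
end
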